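/- arXiv:2203.13989 — 4 statements merged into one kernel-verified Lean document; each statement's English description precedes it below -/
import Mathlib

section
/- Let G be a unimodular locally compact group, K a compact subgroup, φ a continuous strictly positive function on G, and u a continuous function on G. Then the following are equivalent: (a) there is C ≥ 0 with |∫_G u(x) f(x) dx| ≤ C ∫_G (𝒜f)(x) φ(x) dx for all compactly supported continuous f; (b) (𝒜u)(x) ≤ C φ(x) for all x ∈ G, where φ is assumed K-bi-invariant. -/
open MeasureTheory
open scoped ENNReal NNReal Pointwise

noncomputable section

variable {G : Type*} [Group G] [TopologicalSpace G] [IsTopologicalGroup G]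
  [MeasurableSpace G] [BorelSpace G] [LocallyCompactSpace G]

/-- Root-mean-square average over a compact subgroup `K` (normalized Haar measure `ν`). -/
def rmsAvg (K : Subgroup G) (ν : Measure K) (u : G → ℂ) (x : G) : ℝ :=
  Real.sqrt (∫ k : K, ∫ k' : K, ‖u (↑k * x * ↑k')‖ ^ 2 ∂ν ∂ν)

/-! ### Auxiliary lemmas -/

section Aux

/-- A function vanishing outside a compact set of an R1 space has compact support. -/
private lemma hcs_of_isCompact {X β : Type*} [TopologicalSpace X] [R1Space X] [Zero β]
    {f : X → β} {S : Set X} (hS : IsCompact S) (h : ∀ x ∉ S, f x = 0) :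
    HasCompactSupport f := by
  have hsupp : Function.support f ⊆ S := fun x hx => by
    by_contra hxS; exact hx (h x hxS)
  exact IsCompact.of_isClosed_subset hS.closure (isClosed_tsupport f) (closure_mono hsupp)

private lemma sm_compactSpace {Z E : Type*} [TopologicalSpace Z] [MeasurableSpace Z]
    [OpensMeasurableSpace Z] [CompactSpace Z] [NormedAddCommGroup E] [MeasurableSpace E]
    [BorelSpace E] {f : Z → E} (hf : Continuous f) : StronglyMeasurable f :=
  hf.stronglyMeasurable_of_support_subset_isCompact isCompact_univ (Set.subset_univ _)

private lemma bound_compactSpace {Z E : Type*} [TopologicalSpace Z] [CompactSpace Z]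
    [NormedAddCommGroup E] {f : Z → E} (hf : Continuous f) :
    ∃ C : ℝ, 0 ≤ C ∧ ∀ z, ‖f z‖ ≤ C := by
  rcases isEmpty_or_nonempty Z with hZ | hZ
  · exact ⟨0, le_rfl, fun z => (IsEmpty.false z).elim⟩
  · obtain ⟨q, -, hq⟩ := isCompact_univ.exists_isMaxOn Set.univ_nonempty
      (continuous_norm.comp hf).continuousOn
    exact ⟨‖f q‖, norm_nonneg _, fun z => hq (Set.mem_univ z)⟩

private lemma integrable_compactSpace {Z E : Type*} [TopologicalSpace Z] [MeasurableSpace Z]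
    [OpensMeasurableSpace Z] [CompactSpace Z] [NormedAddCommGroup E] [MeasurableSpace E]
    [BorelSpace E] (ρ : Measure Z) [IsFiniteMeasure ρ] {f : Z → E} (hf : Continuous f) :
    Integrable f ρ := by
  obtain ⟨C, -, hC⟩ := bound_compactSpace hf
  exact ⟨(sm_compactSpace hf).aestronglyMeasurable,
    HasFiniteIntegral.of_bounded (C := C) (Filter.Eventually.of_forall hC)⟩

/-- Strong measurability for continuous functions on a compact product space. -/
private lemma sm_compactProd {Z₁ Z₂ E : Type*} [TopologicalSpace Z₁] [MeasurableSpace Z₁]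
    [OpensMeasurableSpace Z₁] [CompactSpace Z₁] [TopologicalSpace Z₂] [MeasurableSpace Z₂]
    [OpensMeasurableSpace Z₂] [CompactSpace Z₂] [NormedAddCommGroup E]
    {f : Z₁ × Z₂ → E} (hf : Continuous f) : StronglyMeasurable f := by
  have hcs : HasCompactSupport f := IsClosed.isCompact (isClosed_tsupport f)
  exact hcs.stronglyMeasurable_of_prod hf

private lemma integrable_compactProd {Z₁ Z₂ E : Type*} [TopologicalSpace Z₁] [MeasurableSpace Z₁]
    [OpensMeasurableSpace Z₁] [CompactSpace Z₁] [TopologicalSpace Z₂] [MeasurableSpace Z₂]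
    [OpensMeasurableSpace Z₂] [CompactSpace Z₂] [NormedAddCommGroup E]
    (ρ : Measure (Z₁ × Z₂)) [IsFiniteMeasure ρ] {f : Z₁ × Z₂ → E} (hf : Continuous f) :
    Integrable f ρ := by
  obtain ⟨C, -, hC⟩ := bound_compactSpace hf
  exact ⟨(sm_compactProd hf).aestronglyMeasurable,
    HasFiniteIntegral.of_bounded (C := C) (Filter.Eventually.of_forall hC)⟩

private lemma memLp_compactProd {Z₁ Z₂ E : Type*} [TopologicalSpace Z₁] [MeasurableSpace Z₁]
    [OpensMeasurableSpace Z₁] [CompactSpace Z₁] [TopologicalSpace Z₂] [MeasurableSpace Z₂]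
    [OpensMeasurableSpace Z₂] [CompactSpace Z₂] [NormedAddCommGroup E]
    (ρ : Measure (Z₁ × Z₂)) [IsFiniteMeasure ρ] (p : ℝ≥0∞) {f : Z₁ × Z₂ → E}
    (hf : Continuous f) : MemLp f p ρ := by
  obtain ⟨C, -, hC⟩ := bound_compactSpace hf
  exact MemLp.of_bound (sm_compactProd hf).aestronglyMeasurable C
    (Filter.Eventually.of_forall hC)

/-- Continuity of a parametric integral over a compact space. -/
private lemma cont_int {X Z E : Type*} [TopologicalSpace X]
    [TopologicalSpace Z] [MeasurableSpace Z] [OpensMeasurableSpace Z] [CompactSpace Z]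
    [NormedAddCommGroup E] [NormedSpace ℝ E] [MeasurableSpace E] [BorelSpace E]
    (ρ : Measure Z) [IsFiniteMeasure ρ] {F : X × Z → E} (hF : Continuous F) :
    Continuous fun x => ∫ z, F (x, z) ∂ρ := by
  have hL : LipschitzWith (ρ Set.univ).toNNReal (fun g : C(Z, E) => ∫ z, g z ∂ρ) := by
    apply LipschitzWith.of_dist_le_mul
    intro g h
    rw [dist_eq_norm, ← integral_sub (integrable_compactSpace ρ g.continuous)
      (integrable_compactSpace ρ h.continuous)]
    calc ‖∫ z, (g z - h z) ∂ρ‖ ≤ ∫ z, ‖g z - h z‖ ∂ρ := norm_integral_le_integral_norm _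
      _ ≤ ∫ _z, dist g h ∂ρ := by
          refine integral_mono ((integrable_compactSpace ρ g.continuous).sub
            (integrable_compactSpace ρ h.continuous)).norm (integrable_const _) fun z => ?_
          rw [← dist_eq_norm]
          exact ContinuousMap.dist_apply_le_dist z
      _ = (ρ Set.univ).toNNReal * dist g h := by
          rw [integral_const, smul_eq_mul]; rfl
  have hcurry := (ContinuousMap.curry ⟨F, hF⟩).continuous
  exact hL.continuous.comp hcurry

end Aux

section KGroup

variable (K : Subgroup G) [CompactSpace K] [BorelSpace K] (ν : Measure K)

/-- Uniqueness of the Haar probability measure on a compact group. -/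
private lemma haarK_unique [ν.IsHaarMeasure] [IsProbabilityMeasure ν]
    (ν' : Measure K) [ν'.IsMulLeftInvariant] [IsProbabilityMeasure ν'] : ν' = ν := by
  have c1 : ((ν'.haarScalarFactor ν : ℝ≥0) : ℝ≥0∞) = 1 := by
    have h2 := Measure.measure_isMulInvariant_eq_smul_of_isCompact_closure ν' ν
      (s := Set.univ) (by simpa using isCompact_univ)
    simpa [measure_univ, ENNReal.smul_def] using h2.symm
  ext s hs
  have h1 := Measure.measure_isMulInvariant_eq_smul_of_isCompact_closure ν' ν
    (s := s) (isClosed_closure.isCompact)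
  simpa [ENNReal.smul_def, c1] using h1

private lemma nu_right [ν.IsHaarMeasure] [IsProbabilityMeasure ν] :
    ν.IsMulRightInvariant := by
  constructor
  intro g
  haveI : IsProbabilityMeasure (Measure.map (· * g) ν) :=
    Measure.isProbabilityMeasure_map (measurable_mul_const g).aemeasurable
  exact haarK_unique K ν _

private lemma nu_inv [ν.IsHaarMeasure] [IsProbabilityMeasure ν] :
    ν.IsInvInvariant := by
  haveI := nu_right K ν
  haveI : IsProbabilityMeasure ν.inv := by
    constructor
    rw [Measure.inv, Measure.map_apply measurable_inv MeasurableSet.univ]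
    simp
  exact ⟨haarK_unique K ν ν.inv⟩

/-- The double average of a function over the compact subgroup. -/
private def avg2 (w : G → ℝ) (x : G) : ℝ :=
  ∫ k : K, ∫ k' : K, w (↑k * x * ↑k') ∂ν ∂ν

variable [IsProbabilityMeasure ν]

private lemma avg2_nonneg {w : G → ℝ} (hw : ∀ y, 0 ≤ w y) (x : G) : 0 ≤ avg2 K ν w x :=
  integral_nonneg fun _ => integral_nonneg fun _ => hw _

private lemma avg2_zero {w : G → ℝ} {x : G} (h : ∀ k k' : K, w (↑k * x * ↑k') = 0) :
    avg2 K ν w x = 0 := by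
  unfold avg2; simp [h]

private lemma cont_kxk (x : G) : Continuous fun p : K × K => (↑p.1 * x * ↑p.2 : G) :=
  ((continuous_subtype_val.comp continuous_fst).mul continuous_const).mul
    (continuous_subtype_val.comp continuous_snd)

private lemma avg2_cont {w : G → ℝ} (hw : Continuous w) : Continuous (avg2 K ν w) := by
  have hW : Continuous fun q : (G × K) × K => w (↑q.1.2 * q.1.1 * ↑q.2) := by
    apply hw.comp
    exact ((continuous_subtype_val.comp (continuous_snd.comp continuous_fst)).mul
      (continuous_fst.comp continuous_fst)).mul (continuous_subtype_val.comp continuous_snd)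
  have h1 : Continuous fun p : G × K => ∫ k' : K, w (↑p.2 * p.1 * ↑k') ∂ν := cont_int ν hW
  exact cont_int ν h1

private lemma avg2_eq_prodInt {w : G → ℝ} (hw : Continuous w) (x : G) :
    avg2 K ν w x = ∫ p : K × K, w (↑p.1 * x * ↑p.2) ∂(ν.prod ν) :=
  integral_integral (integrable_compactProd _ (hw.comp (cont_kxk K x)))

private lemma avg2_bi [ν.IsMulLeftInvariant] [ν.IsMulRightInvariant]
    (w : G → ℝ) (k₀ k₀' : K) (x : G) :
    avg2 K ν w (↑k₀ * x * ↑k₀') = avg2 K ν w x := by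
  show (∫ k : K, ∫ k' : K, w (↑k * (↑k₀ * x * ↑k₀') * ↑k') ∂ν ∂ν) = _
  calc (∫ k : K, ∫ k' : K, w (↑k * (↑k₀ * x * ↑k₀') * ↑k') ∂ν ∂ν)
      = ∫ k : K, ∫ k' : K, w (↑(k * k₀) * x * ↑(k₀' * k')) ∂ν ∂ν := by
        refine congrArg (integral ν)
          (funext fun k => congrArg (integral ν) (funext fun k' => congrArg w ?_))
        push_cast
        group
    _ = ∫ k : K, ∫ k' : K, w (↑(k * k₀) * x * ↑k') ∂ν ∂ν := by
        refine congrArg (integral ν) (funext fun k => ?_)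
        exact integral_mul_left_eq_self (μ := ν) (fun c : K => w (↑(k * k₀) * x * ↑c)) k₀'
    _ = ∫ k : K, ∫ k' : K, w (↑k * x * ↑k') ∂ν ∂ν :=
        integral_mul_right_eq_self (μ := ν) (fun c : K => ∫ k' : K, w (↑c * x * ↑k') ∂ν) k₀

private lemma avg2_inv [ν.IsInvInvariant] (w : G → ℝ) (x : G) :
    (∫ k : K, ∫ k' : K, w ((↑k)⁻¹ * x * (↑k')⁻¹) ∂ν ∂ν) = avg2 K ν w x := by
  calc (∫ k : K, ∫ k' : K, w ((↑k)⁻¹ * x * (↑k')⁻¹) ∂ν ∂ν)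
      = ∫ k : K, ∫ k' : K, w ((↑k)⁻¹ * x * ↑k') ∂ν ∂ν := by
        refine congrArg (integral ν) (funext fun k => ?_)
        exact integral_inv_eq_self (fun c : K => w ((↑k)⁻¹ * x * ↑c)) ν
    _ = ∫ k : K, ∫ k' : K, w (↑k * x * ↑k') ∂ν ∂ν :=
        integral_inv_eq_self (fun c : K => ∫ k' : K, w (↑c * x * ↑k') ∂ν) ν

private lemma int_translate (μ : Measure G) [μ.IsMulLeftInvariant] [μ.IsMulRightInvariant]
    {E : Type*} [NormedAddCommGroup E] [NormedSpace ℝ E] (h : G → E) (a b : G) :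
    ∫ x, h (a * x * b) ∂μ = ∫ x, h x ∂μ :=
  calc ∫ x, h (a * x * b) ∂μ = ∫ y, h (y * b) ∂μ :=
        integral_mul_left_eq_self (fun y => h (y * b)) a
    _ = ∫ x, h x ∂μ := integral_mul_right_eq_self h b

/-- Fubini-type swap for `∫∫_{K×K} ∫_G`. -/
private lemma swap3 (μ : Measure G) [IsFiniteMeasureOnCompacts μ]
    {E : Type*} [NormedAddCommGroup E] [NormedSpace ℝ E] [MeasurableSpace E] [BorelSpace E]
    {F : K → K → G → E}
    (hF : Continuous fun z : (K × K) × G => F z.1.1 z.1.2 z.2)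
    {S : Set G} (hS : IsCompact S) (hvan : ∀ (k k' : K) (x : G), x ∉ S → F k k' x = 0) :
    ∫ k : K, ∫ k' : K, ∫ x, F k k' x ∂μ ∂ν ∂ν
      = ∫ x, ∫ k : K, ∫ k' : K, F k k' x ∂ν ∂ν ∂μ := by
  have h1 : ∀ k : K, (∫ k' : K, ∫ x, F k k' x ∂μ ∂ν) = ∫ x, ∫ k' : K, F k k' x ∂ν ∂μ := by
    intro k
    apply integral_integral_swap_of_hasCompactSupport
    · exact hF.comp ((continuous_const.prodMk continuous_fst).prodMk continuous_snd)
    · apply hcs_of_isCompact (isCompact_univ.prod hS)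
      rintro ⟨k', x⟩ hp
      exact hvan k k' x fun hx => hp ⟨trivial, hx⟩
  simp_rw [h1]
  apply integral_integral_swap_of_hasCompactSupport
  · exact cont_int (X := K × G) ν
      (hF.comp (((continuous_fst.comp continuous_fst).prodMk continuous_snd).prodMk
        (continuous_snd.comp continuous_fst)))
  · apply hcs_of_isCompact (isCompact_univ.prod hS)
    rintro ⟨k, x⟩ hp
    have hx : x ∉ S := fun h => hp ⟨trivial, h⟩
    have hz : ∀ k' : K, F k k' x = 0 := fun k' => hvan k k' x hx
    simp [Function.uncurry, hz]

end KGroup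

/-- **duality.** For a continuous function `u` and a continuous strictly positive
`K`-bi-invariant `φ`, the following are equivalent: (a) there is `C ≥ 0` with
`|∫ u f| ≤ C ∫ 𝒜f · φ` for all compactly supported continuous `f`; (b) there is `C ≥ 0` with
`𝒜u ≤ C φ` pointwise. -/
theorem duality_rmsAvg (μ : Measure G) [μ.IsHaarMeasure] [μ.IsMulRightInvariant]
    (K : Subgroup G) [CompactSpace K] (ν : Measure K) [ν.IsHaarMeasure]
    [IsProbabilityMeasure ν]
    (φ : G → ℝ) (hφcont : Continuous φ) (hφpos : ∀ x, 0 < φ x)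
    (hφbi : ∀ (k : K) (x : G), φ (↑k * x) = φ x ∧ φ (x * ↑k) = φ x)
    (u : G → ℂ) (hu : Continuous u) :
    (∃ C : ℝ, 0 ≤ C ∧ ∀ f : G → ℂ, Continuous f → HasCompactSupport f →
        ‖∫ x, u x * f x ∂μ‖ ≤ C * ∫ x, rmsAvg K ν f x * φ x ∂μ) ↔
      (∃ C : ℝ, 0 ≤ C ∧ ∀ x : G, rmsAvg K ν u x ≤ C * φ x) := by
  haveI : BorelSpace K := Subtype.borelSpace _
  haveI hνr : ν.IsMulRightInvariant := nu_right K ν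
  haveI hνi : ν.IsInvInvariant := nu_inv K ν
  have hKset : IsCompact (K : Set G) := by
    have := isCompact_range (continuous_subtype_val (p := fun x => x ∈ K))
    rwa [Subtype.range_coe] at this
  -- `rmsAvg` as `sqrt ∘ avg2`
  have hA : ∀ (v : G → ℂ) (x : G), rmsAvg K ν v x
      = Real.sqrt (avg2 K ν (fun y => ‖v y‖ ^ 2) x) := fun v x => rfl
  have hAcont : ∀ (v : G → ℂ), Continuous v → Continuous (rmsAvg K ν v) := by
    intro v hv
    rw [show rmsAvg K ν v = fun x => Real.sqrt (avg2 K ν (fun y => ‖v y‖ ^ 2) x) from rfl]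
    exact Real.continuous_sqrt.comp (avg2_cont K ν ((hv.norm).pow 2))
  have hAnonneg : ∀ (v : G → ℂ) (x : G), 0 ≤ rmsAvg K ν v x := fun v x => Real.sqrt_nonneg _
  have hAusq : ∀ x, rmsAvg K ν u x ^ 2 = avg2 K ν (fun y => ‖u y‖ ^ 2) x := by
    intro x
    rw [hA u x]
    exact Real.sq_sqrt (avg2_nonneg K ν (fun y => sq_nonneg ‖u y‖) x)
  have hzc : Continuous fun z : (K × K) × G => (↑z.1.1 * z.2 * ↑z.1.2 : G) :=
    ((continuous_subtype_val.comp (continuous_fst.comp continuous_fst)).mul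
      continuous_snd).mul (continuous_subtype_val.comp (continuous_snd.comp continuous_fst))
  have hcoe : ∀ k : K, ((k⁻¹ : K) : G) = (↑k : G)⁻¹ := fun k => rfl
  -- support transfer
  have hsupp_lem : ∀ {β : Type} [Zero β] (f : G → β), HasCompactSupport f →
      ∀ (k k' : K) (x : G), x ∉ (K : Set G) * tsupport f * (K : Set G) →
        f (↑k * x * ↑k') = 0 := by
    intro β _ f hfc k k' x hx
    by_contra h0
    apply hx
    have hy : (↑k * x * ↑k' : G) ∈ tsupport f := subset_tsupport f h0
    have hxeq : x = ↑(k⁻¹) * (↑k * x * ↑k') * ↑(k'⁻¹) := by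
      rw [hcoe, hcoe]; group
    rw [hxeq]
    exact Set.mul_mem_mul (Set.mul_mem_mul (SetLike.coe_mem (k⁻¹)) hy) (SetLike.coe_mem (k'⁻¹))
  -- pointwise Cauchy–Schwarz
  have holder : ∀ (f : G → ℂ), Continuous f → ∀ x : G,
      ‖∫ k : K, ∫ k' : K, u (↑k * x * ↑k') * f (↑k * x * ↑k') ∂ν ∂ν‖
        ≤ rmsAvg K ν u x * rmsAvg K ν f x := by
    intro f hf x
    have hm := cont_kxk K x
    have hcu : Continuous fun p : K × K => u (↑p.1 * x * ↑p.2) := hu.comp hm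
    have hcf : Continuous fun p : K × K => f (↑p.1 * x * ↑p.2) := hf.comp hm
    have h2 : (2 : ℝ).HolderConjugate 2 := Real.holderConjugate_iff.mpr ⟨one_lt_two, by norm_num⟩
    have hr2 : ∀ a : ℝ, a ^ (2 : ℝ) = a ^ 2 := fun a => by
      rw [show (2 : ℝ) = ((2 : ℕ) : ℝ) by norm_num, Real.rpow_natCast]
    have eAv : ∀ (v : G → ℂ), Continuous v → rmsAvg K ν v x
        = (∫ p : K × K, ‖v (↑p.1 * x * ↑p.2)‖ ^ (2 : ℝ) ∂(ν.prod ν)) ^ (1 / 2 : ℝ) := by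
      intro v hv
      simp only [hr2]
      rw [hA v x, avg2_eq_prodInt K ν (w := fun y => ‖v y‖ ^ 2) ((hv.norm).pow 2) x, Real.sqrt_eq_rpow]
    have e1 : (∫ k : K, ∫ k' : K, u (↑k * x * ↑k') * f (↑k * x * ↑k') ∂ν ∂ν)
        = ∫ p : K × K, u (↑p.1 * x * ↑p.2) * f (↑p.1 * x * ↑p.2) ∂(ν.prod ν) :=
      integral_integral (integrable_compactProd _ (hcu.mul hcf))
    rw [e1]
    calc ‖∫ p : K × K, u (↑p.1 * x * ↑p.2) * f (↑p.1 * x * ↑p.2) ∂(ν.prod ν)‖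
        ≤ ∫ p : K × K, ‖u (↑p.1 * x * ↑p.2)‖ * ‖f (↑p.1 * x * ↑p.2)‖ ∂(ν.prod ν) := by
          refine (norm_integral_le_integral_norm _).trans_eq ?_
          refine congrArg (integral (ν.prod ν)) (funext fun p => ?_)
          exact norm_mul _ _
      _ ≤ (∫ p : K × K, ‖u (↑p.1 * x * ↑p.2)‖ ^ (2:ℝ) ∂(ν.prod ν)) ^ (1/2 : ℝ)
            * (∫ p : K × K, ‖f (↑p.1 * x * ↑p.2)‖ ^ (2:ℝ) ∂(ν.prod ν)) ^ (1/2 : ℝ) :=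
          integral_mul_norm_le_Lp_mul_Lq h2 (memLp_compactProd _ _ hcu) (memLp_compactProd _ _ hcf)
      _ = rmsAvg K ν u x * rmsAvg K ν f x := by rw [← eAv u hu, ← eAv f hf]
  constructor
  · -- (a) → (b)
    rintro ⟨C, hC0, hC⟩
    refine ⟨C, hC0, ?_⟩
    intro x₀
    by_contra hlt'
    push_neg at hlt'
    -- the open set where the defect is positive
    set D : G → ℝ := fun y => rmsAvg K ν u y ^ 2 - C * (rmsAvg K ν u y * φ y) with hD
    have hDcont : Continuous D :=
      (((hAcont u hu).pow 2)).sub (continuous_const.mul ((hAcont u hu).mul hφcont))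
    have hDx₀ : 0 < D x₀ := by
      have h1 : 0 < rmsAvg K ν u x₀ := lt_of_le_of_lt (mul_nonneg hC0 (hφpos x₀).le) hlt'
      have h2 : D x₀ = rmsAvg K ν u x₀ * (rmsAvg K ν u x₀ - C * φ x₀) := by
        rw [hD]; ring
      rw [h2]
      exact mul_pos h1 (sub_pos.mpr hlt')
    set V : Set G := {y | 0 < D y} with hV
    have hVopen : IsOpen V := isOpen_lt continuous_const hDcont
    obtain ⟨ψ, hψ1, hψ0, hψcs, hψ01⟩ := exists_continuous_one_zero_of_isCompact
      (isCompact_singleton (x := x₀)) hVopen.isClosed_compl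
      (Set.disjoint_singleton_left.mpr (fun h => h hDx₀))
    have hψc : Continuous (⇑ψ) := ψ.continuous
    have hψnn : ∀ y, 0 ≤ ψ y := fun y => (hψ01 y).1
    have hψV : ∀ y, y ∉ V → ψ y = 0 := fun y hy => hψ0 hy
    set g : G → ℝ := avg2 K ν ⇑ψ with hg
    have hgcont : Continuous g := avg2_cont K ν hψc
    have hgnn : ∀ y, 0 ≤ g y := avg2_nonneg K ν hψnn
    set f : G → ℂ := fun y => (starRingEnd ℂ) (u y) * ((g y : ℝ) : ℂ) with hf
    have hfcont : Continuous f :=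
      (RCLike.continuous_conj.comp hu).mul (Complex.continuous_ofReal.comp hgcont)
    set T := (K : Set G) * tsupport ⇑ψ * (K : Set G) with hT
    have hTcomp : IsCompact T := (hKset.mul hψcs).mul hKset
    have hψvan : ∀ (k k' : K) (y : G), y ∉ T → ψ (↑k * y * ↑k') = 0 :=
      fun k k' y hy => hsupp_lem (⇑ψ) hψcs k k' y hy
    have hg0 : ∀ y, y ∉ T → g y = 0 := fun y hy =>
      avg2_zero K ν (fun k k' => hψvan k k' y hy)
    have hfcs : HasCompactSupport f := hcs_of_isCompact hTcomp
      (fun y hy => by rw [hf]; dsimp only; rw [hg0 y hy]; simp)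
    have hgbi : ∀ (k k' : K) (y : G), g (↑k * y * ↑k') = g y :=
      fun k k' y => avg2_bi K ν ⇑ψ k k' y
    -- rmsAvg of the test function
    have hAf : ∀ y, rmsAvg K ν f y = g y * rmsAvg K ν u y := by
      intro y
      rw [hA f y, hA u y]
      have hptw : ∀ k k' : K, ‖f (↑k * y * ↑k')‖ ^ 2 = g y ^ 2 * ‖u (↑k * y * ↑k')‖ ^ 2 := by
        intro k k'
        rw [hf]; dsimp only
        rw [norm_mul, hgbi k k' y, Complex.norm_real, Real.norm_eq_abs, abs_of_nonneg (hgnn y),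
          RCLike.norm_conj]
        ring
      have key : avg2 K ν (fun z => ‖f z‖ ^ 2) y
          = g y ^ 2 * avg2 K ν (fun z => ‖u z‖ ^ 2) y := by
        show (∫ k : K, ∫ k' : K, ‖f (↑k * y * ↑k')‖ ^ 2 ∂ν ∂ν)
          = g y ^ 2 * ∫ k : K, ∫ k' : K, ‖u (↑k * y * ↑k')‖ ^ 2 ∂ν ∂ν
        simp_rw [hptw, integral_const_mul]
      rw [key, Real.sqrt_mul (sq_nonneg _), Real.sqrt_sq (hgnn y)]
    -- the pairing is the integral of `‖u‖² g`
    have epair : (∫ y, u y * f y ∂μ) = ((∫ y, ‖u y‖ ^ 2 * g y ∂μ : ℝ) : ℂ) := by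
      have ecast : (∫ y, ((‖u y‖ ^ 2 * g y : ℝ) : ℂ) ∂μ) = ((∫ y, ‖u y‖ ^ 2 * g y ∂μ : ℝ) : ℂ) :=
        integral_ofReal
      rw [← ecast]
      refine congrArg (integral μ) (funext fun y => ?_)
      rw [hf]; dsimp only
      calc u y * ((starRingEnd ℂ) (u y) * ((g y : ℝ) : ℂ))
          = (u y * (starRingEnd ℂ) (u y)) * ((g y : ℝ) : ℂ) := by ring
        _ = ((Complex.normSq (u y) : ℝ) : ℂ) * ((g y : ℝ) : ℂ) := by rw [Complex.mul_conj]
        _ = ((‖u y‖ ^ 2 * g y : ℝ) : ℂ) := by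
            rw [Complex.normSq_eq_norm_sq]
            push_cast
            ring
    -- key identity I1
    have husq : Continuous fun y : G => ‖u y‖ ^ 2 := (hu.norm).pow 2
    have hinvzc : Continuous fun z : (K × K) × G => ((↑z.1.1 : G)⁻¹ * z.2 * (↑z.1.2 : G)⁻¹) :=
      (((continuous_subtype_val.comp (continuous_fst.comp continuous_fst)).inv).mul
        continuous_snd).mul ((continuous_subtype_val.comp (continuous_snd.comp continuous_fst)).inv)
    have I1 : (∫ y, ‖u y‖ ^ 2 * g y ∂μ) = ∫ y, ψ y * rmsAvg K ν u y ^ 2 ∂μ := by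
      have p1 : ∀ y : G, ‖u y‖ ^ 2 * g y
          = ∫ k : K, ∫ k' : K, ‖u y‖ ^ 2 * ψ (↑k * y * ↑k') ∂ν ∂ν := by
        intro y
        rw [hg]
        show _ * (∫ k : K, ∫ k' : K, ψ (↑k * y * ↑k') ∂ν ∂ν) = _
        simp_rw [integral_const_mul]
      have s1 := swap3 K ν μ (F := fun (k k' : K) (y : G) => ‖u y‖ ^ 2 * ψ (↑k * y * ↑k'))
        ((husq.comp continuous_snd).mul (hψc.comp hzc)) hTcomp
        (fun k k' y hy => by
          show ‖u y‖ ^ 2 * ψ (↑k * y * ↑k') = 0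
          rw [hψvan k k' y hy, mul_zero])
      have s2 := swap3 K ν μ
        (F := fun (k k' : K) (y : G) => ‖u ((↑k : G)⁻¹ * y * (↑k' : G)⁻¹)‖ ^ 2 * ψ y)
        ((husq.comp hinvzc).mul (hψc.comp continuous_snd)) hψcs
        (fun k k' y hy => by
          show ‖u ((↑k : G)⁻¹ * y * (↑k' : G)⁻¹)‖ ^ 2 * ψ y = 0
          rw [image_eq_zero_of_notMem_tsupport hy, mul_zero])
      have p2 : ∀ k k' : K, (∫ y, ‖u y‖ ^ 2 * ψ (↑k * y * ↑k') ∂μ)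
          = ∫ y, ‖u ((↑k : G)⁻¹ * y * (↑k' : G)⁻¹)‖ ^ 2 * ψ y ∂μ := by
        intro k k'
        calc (∫ y, ‖u y‖ ^ 2 * ψ (↑k * y * ↑k') ∂μ)
            = ∫ y, ‖u ((↑k : G)⁻¹ * y * (↑k' : G)⁻¹)‖ ^ 2
                * ψ (↑k * ((↑k : G)⁻¹ * y * (↑k' : G)⁻¹) * ↑k') ∂μ :=
              (int_translate μ (fun z => ‖u z‖ ^ 2 * ψ (↑k * z * ↑k'))
                ((↑k : G))⁻¹ ((↑k' : G))⁻¹).symm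
          _ = ∫ y, ‖u ((↑k : G)⁻¹ * y * (↑k' : G)⁻¹)‖ ^ 2 * ψ y ∂μ := by
              refine congrArg (integral μ) (funext fun y => ?_)
              exact congrArg (fun t => ‖u ((↑k : G)⁻¹ * y * (↑k' : G)⁻¹)‖ ^ 2 * ψ t) (by group)
      calc (∫ y, ‖u y‖ ^ 2 * g y ∂μ)
          = ∫ y, ∫ k : K, ∫ k' : K, ‖u y‖ ^ 2 * ψ (↑k * y * ↑k') ∂ν ∂ν ∂μ :=
            congrArg (integral μ) (funext p1)
        _ = ∫ k : K, ∫ k' : K, ∫ y, ‖u y‖ ^ 2 * ψ (↑k * y * ↑k') ∂μ ∂ν ∂ν := s1.symm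
        _ = ∫ k : K, ∫ k' : K, ∫ y, ‖u ((↑k : G)⁻¹ * y * (↑k' : G)⁻¹)‖ ^ 2 * ψ y ∂μ ∂ν ∂ν :=
            congrArg (integral ν) (funext fun k =>
              congrArg (integral ν) (funext fun k' => p2 k k'))
        _ = ∫ y, ∫ k : K, ∫ k' : K, ‖u ((↑k : G)⁻¹ * y * (↑k' : G)⁻¹)‖ ^ 2 * ψ y ∂ν ∂ν ∂μ := s2
        _ = ∫ y, ψ y * rmsAvg K ν u y ^ 2 ∂μ := by
            refine congrArg (integral μ) (funext fun y => ?_)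
            calc (∫ k : K, ∫ k' : K, ‖u ((↑k : G)⁻¹ * y * (↑k' : G)⁻¹)‖ ^ 2 * ψ y ∂ν ∂ν)
                = (∫ k : K, ∫ k' : K, ‖u ((↑k : G)⁻¹ * y * (↑k' : G)⁻¹)‖ ^ 2 ∂ν ∂ν) * ψ y := by
                  simp_rw [integral_mul_const]
              _ = ψ y * rmsAvg K ν u y ^ 2 := by
                  rw [avg2_inv K ν (fun z => ‖u z‖ ^ 2) y, ← hAusq y, mul_comm]
    -- key identity I2
    have I2 : (∫ y, g y * rmsAvg K ν u y * φ y ∂μ)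
        = ∫ y, ψ y * (rmsAvg K ν u y * φ y) ∂μ := by
      have p1 : ∀ y : G, g y * rmsAvg K ν u y * φ y
          = ∫ k : K, ∫ k' : K, ψ (↑k * y * ↑k') * (rmsAvg K ν u y * φ y) ∂ν ∂ν := by
        intro y
        have : (∫ k : K, ∫ k' : K, ψ (↑k * y * ↑k') * (rmsAvg K ν u y * φ y) ∂ν ∂ν)
            = avg2 K ν ⇑ψ y * (rmsAvg K ν u y * φ y) := by
          simp_rw [integral_mul_const]; rfl
        rw [this, hg]; ring
      have s1 := swap3 K ν μ
        (F := fun (k k' : K) (y : G) => ψ (↑k * y * ↑k') * (rmsAvg K ν u y * φ y))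
        ((hψc.comp hzc).mul (((hAcont u hu).comp continuous_snd).mul
          (hφcont.comp continuous_snd))) hTcomp
        (fun k k' y hy => by
          show ψ (↑k * y * ↑k') * (rmsAvg K ν u y * φ y) = 0
          rw [hψvan k k' y hy, zero_mul])
      have p2 : ∀ k k' : K, (∫ y, ψ (↑k * y * ↑k') * (rmsAvg K ν u y * φ y) ∂μ)
          = ∫ y, ψ y * (rmsAvg K ν u y * φ y) ∂μ := by
        intro k k'
        calc (∫ y, ψ (↑k * y * ↑k') * (rmsAvg K ν u y * φ y) ∂μ)
            = ∫ y, ψ (↑k * ((↑k : G)⁻¹ * y * (↑k' : G)⁻¹) * ↑k')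
                * (rmsAvg K ν u ((↑k : G)⁻¹ * y * (↑k' : G)⁻¹)
                    * φ ((↑k : G)⁻¹ * y * (↑k' : G)⁻¹)) ∂μ :=
              (int_translate μ (fun z => ψ (↑k * z * ↑k') * (rmsAvg K ν u z * φ z))
                ((↑k : G))⁻¹ ((↑k' : G))⁻¹).symm
          _ = ∫ y, ψ y * (rmsAvg K ν u y * φ y) ∂μ := by
              refine congrArg (integral μ) (funext fun y => ?_)
              have e₁ : (↑k * ((↑k : G)⁻¹ * y * (↑k' : G)⁻¹) * ↑k' : G) = y := by group
              have e₂ : rmsAvg K ν u ((↑k : G)⁻¹ * y * (↑k' : G)⁻¹) = rmsAvg K ν u y := by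
                rw [hA u _, hA u y]
                congr 1
                have := avg2_bi K ν (fun z => ‖u z‖ ^ 2) k⁻¹ k'⁻¹ y
                rwa [hcoe, hcoe] at this
              have e₃ : φ ((↑k : G)⁻¹ * y * (↑k' : G)⁻¹) = φ y := by
                have h1 := (hφbi k'⁻¹ ((↑k : G)⁻¹ * y)).2
                rw [hcoe] at h1
                have h2 := (hφbi k⁻¹ y).1
                rw [hcoe] at h2
                rw [h1, h2]
              rw [e₁, e₂, e₃]
      calc (∫ y, g y * rmsAvg K ν u y * φ y ∂μ)
          = ∫ y, ∫ k : K, ∫ k' : K, ψ (↑k * y * ↑k') * (rmsAvg K ν u y * φ y) ∂ν ∂ν ∂μ :=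
            congrArg (integral μ) (funext p1)
        _ = ∫ k : K, ∫ k' : K, ∫ y, ψ (↑k * y * ↑k') * (rmsAvg K ν u y * φ y) ∂μ ∂ν ∂ν := s1.symm
        _ = ∫ k : K, ∫ k' : K, ∫ y, ψ y * (rmsAvg K ν u y * φ y) ∂μ ∂ν ∂ν :=
            congrArg (integral ν) (funext fun k =>
              congrArg (integral ν) (funext fun k' => p2 k k'))
        _ = ∫ y, ψ y * (rmsAvg K ν u y * φ y) ∂μ := by
            simp [integral_const, measure_univ]
    -- apply the hypothesis to the test function
    have htest := hC f hfcont hfcs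
    have hL : (∫ y, ψ y * rmsAvg K ν u y ^ 2 ∂μ)
        ≤ C * ∫ y, ψ y * (rmsAvg K ν u y * φ y) ∂μ := by
      have h2 : (∫ y, ‖u y‖ ^ 2 * g y ∂μ) ≤ ‖∫ y, u y * f y ∂μ‖ := by
        rw [epair, Complex.norm_real, Real.norm_eq_abs]
        exact le_abs_self _
      have h3 : (∫ x, rmsAvg K ν f x * φ x ∂μ) = ∫ y, ψ y * (rmsAvg K ν u y * φ y) ∂μ := by
        rw [← I2]
        refine congrArg (integral μ) (funext fun y => ?_)
        rw [hAf y]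
      rw [← I1]
      calc (∫ y, ‖u y‖ ^ 2 * g y ∂μ) ≤ ‖∫ y, u y * f y ∂μ‖ := h2
        _ ≤ C * ∫ x, rmsAvg K ν f x * φ x ∂μ := htest
        _ = C * ∫ y, ψ y * (rmsAvg K ν u y * φ y) ∂μ := by rw [h3]
    -- positivity contradiction
    have hDψcont1 : Continuous fun y => ψ y * rmsAvg K ν u y ^ 2 :=
      hψc.mul ((hAcont u hu).pow 2)
    have hDψcont2 : Continuous fun y => ψ y * (rmsAvg K ν u y * φ y) :=
      hψc.mul ((hAcont u hu).mul hφcont)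
    have hint1 : Integrable (fun y => ψ y * rmsAvg K ν u y ^ 2) μ :=
      hDψcont1.integrable_of_hasCompactSupport (hcs_of_isCompact hψcs
        (fun y hy => by rw [image_eq_zero_of_notMem_tsupport hy, zero_mul]))
    have hint2 : Integrable (fun y => ψ y * (rmsAvg K ν u y * φ y)) μ :=
      hDψcont2.integrable_of_hasCompactSupport (hcs_of_isCompact hψcs
        (fun y hy => by rw [image_eq_zero_of_notMem_tsupport hy, zero_mul]))
    set Dψ : G → ℝ := fun y => ψ y * rmsAvg K ν u y ^ 2 - C * (ψ y * (rmsAvg K ν u y * φ y))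
      with hDψ
    have hDψcont : Continuous Dψ := hDψcont1.sub (continuous_const.mul hDψcont2)
    have hDψint : Integrable Dψ μ := hint1.sub (hint2.const_mul C)
    have hs0 : (∫ y, Dψ y ∂μ) ≤ 0 := by
      rw [hDψ]
      rw [integral_sub hint1 (hint2.const_mul C), integral_const_mul]
      linarith [hL]
    have hDψ0 : ∀ y, 0 ≤ Dψ y := by
      intro y
      by_cases hy : y ∈ V
      · have hyD : 0 < D y := hy
        have heq : Dψ y = ψ y * D y := by rw [hDψ, hD]; ring
        rw [heq]
        exact mul_nonneg (hψnn y) hyD.le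
      · have heq : Dψ y = ψ y * D y := by rw [hDψ, hD]; ring
        rw [heq, hψV y hy, zero_mul]
    have hpos : 0 < ∫ y, Dψ y ∂μ := by
      rw [integral_pos_iff_support_of_nonneg_ae (Filter.Eventually.of_forall hDψ0) hDψint]
      have hopen : IsOpen (Function.support Dψ) := by
        have : Function.support Dψ = Dψ ⁻¹' ({0}ᶜ) := rfl
        rw [this]
        exact isOpen_compl_singleton.preimage hDψcont
      refine hopen.measure_pos μ ⟨x₀, ?_⟩
      have heq : Dψ x₀ = ψ x₀ * D x₀ := by rw [hDψ, hD]; ring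
      have hψx₀ : ψ x₀ = 1 := by simpa using hψ1 (Set.mem_singleton x₀)
      have : Dψ x₀ = D x₀ := by rw [heq, hψx₀, one_mul]
      show Dψ x₀ ≠ 0
      rw [this]
      exact ne_of_gt hDx₀
    linarith
  · -- (b) → (a)
    rintro ⟨C, hC0, hC⟩
    refine ⟨C, hC0, ?_⟩
    intro f hf hfc
    set S := (K : Set G) * tsupport f * (K : Set G) with hS
    have hScomp : IsCompact S := (hKset.mul hfc).mul hKset
    have hvan : ∀ (k k' : K) (x : G), x ∉ S → f (↑k * x * ↑k') = 0 :=
      fun k k' x hx => hsupp_lem f hfc k k' x hx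
    have e1 : (∫ x, u x * f x ∂μ)
        = ∫ k : K, ∫ k' : K, ∫ x, u (↑k * x * ↑k') * f (↑k * x * ↑k') ∂μ ∂ν ∂ν := by
      have ht : ∀ k k' : K, (∫ x, u (↑k * x * ↑k') * f (↑k * x * ↑k') ∂μ)
          = ∫ x, u x * f x ∂μ := fun k k' =>
        int_translate μ (fun y => u y * f y) (↑k : G) (↑k' : G)
      simp_rw [ht, integral_const, probReal_univ, one_smul]
    have e2 : (∫ x, u x * f x ∂μ)
        = ∫ x, ∫ k : K, ∫ k' : K, u (↑k * x * ↑k') * f (↑k * x * ↑k') ∂ν ∂ν ∂μ := by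
      rw [e1]
      exact swap3 K ν μ (F := fun (k k' : K) (x : G) => u (↑k * x * ↑k') * f (↑k * x * ↑k'))
        ((hu.comp hzc).mul (hf.comp hzc)) hScomp
        (fun k k' x hx => by
          show u (↑k * x * ↑k') * f (↑k * x * ↑k') = 0
          rw [hvan k k' x hx, mul_zero])
    have hAf0 : ∀ x, x ∉ S → rmsAvg K ν f x = 0 := by
      intro x hx
      rw [hA f x, avg2_zero K ν (fun k k' => by
        show ‖f (↑k * x * ↑k')‖ ^ 2 = 0
        rw [hvan k k' x hx]; simp)]
      exact Real.sqrt_zero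
    have hint1 : Integrable (fun x => rmsAvg K ν u x * rmsAvg K ν f x) μ :=
      Continuous.integrable_of_hasCompactSupport ((hAcont u hu).mul (hAcont f hf))
        (hcs_of_isCompact hScomp (fun x hx => by rw [hAf0 x hx, mul_zero]))
    have hint2 : Integrable (fun x => (C * φ x) * rmsAvg K ν f x) μ :=
      Continuous.integrable_of_hasCompactSupport ((continuous_const.mul hφcont).mul (hAcont f hf))
        (hcs_of_isCompact hScomp (fun x hx => by rw [hAf0 x hx, mul_zero]))
    calc ‖∫ x, u x * f x ∂μ‖
        = ‖∫ x, ∫ k : K, ∫ k' : K, u (↑k * x * ↑k') * f (↑k * x * ↑k') ∂ν ∂ν ∂μ‖ := by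
          rw [← e2]
      _ ≤ ∫ x, ‖∫ k : K, ∫ k' : K, u (↑k * x * ↑k') * f (↑k * x * ↑k') ∂ν ∂ν‖ ∂μ :=
          norm_integral_le_integral_norm _
      _ ≤ ∫ x, rmsAvg K ν u x * rmsAvg K ν f x ∂μ :=
          integral_mono_of_nonneg (Filter.Eventually.of_forall fun x => norm_nonneg _) hint1
            (Filter.Eventually.of_forall fun x => holder f hf x)
      _ ≤ ∫ x, (C * φ x) * rmsAvg K ν f x ∂μ :=
          integral_mono_of_nonneg
            (Filter.Eventually.of_forall fun x => mul_nonneg (hAnonneg u x) (hAnonneg f x)) hint2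
            (Filter.Eventually.of_forall fun x =>
              mul_le_mul_of_nonneg_right (hC x) (hAnonneg f x))
      _ = C * ∫ x, rmsAvg K ν f x * φ x ∂μ := by
          rw [← integral_const_mul]
          refine congrArg (integral μ) (funext fun x => ?_)
          ring

end
end

section
/- Let T ≥ 0 be a bounded self-adjoint operator on a Hilbert space H and suppose there exist a vector ξ ∈ H and constants C ≥ 0, r ≥ 0 such that ⟨Tⁿ ξ, ξ⟩ ≤ C rⁿ for all n ≥ 1, and ξ is a cyclic vector for T (the closed span of {Tⁿξ : n ≥ 0} is H). Then ‖T‖ ≤ r. -/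
open scoped ComplexInnerProductSpace

noncomputable section

variable {H : Type*} [NormedAddCommGroup H] [InnerProductSpace ℂ H] [CompleteSpace H]

open Filter
private lemma pow_isPositive (T : H →L[ℂ] H) (hT : T.IsPositive) (n : ℕ) : (T ^ n).IsPositive := by
  rw [← ContinuousLinearMap.nonneg_iff_isPositive] at hT ⊢
  exact CStarAlgebra.pow_nonneg hT n

private lemma inner_le_of_growth (T : H →L[ℂ] H) (hT : T.IsPositive) (x : H) (D r : ℝ)
    (hD : 0 ≤ D) (hr : 0 ≤ r)
    (h : ∀ n : ℕ, 1 ≤ n → (⟪(T ^ n) x, x⟫).re ≤ D * r ^ n) :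
    (⟪T x, x⟫).re ≤ r * ‖x‖ ^ 2 := by
  rcases eq_or_ne x 0 with rfl | hx0
  · simp [inner_zero_right]
  have hx : (0:ℝ) < ‖x‖ := norm_pos_iff.mpr hx0
  have hx2 : (0:ℝ) < ‖x‖ ^ 2 := by positivity
  set a : ℕ → ℝ := fun n => (⟪(T ^ n) x, x⟫).re with ha
  have ha_nonneg : ∀ n, 0 ≤ a n := fun n => (pow_isPositive T hT n).re_inner_nonneg_left x
  -- squaring step
  have hstep : ∀ n, (a n) ^ 2 ≤ a (2 * n) * ‖x‖ ^ 2 := by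
    intro n
    have hsymm := (hT.isSelfAdjoint.pow n).isSymmetric
    have h1 : ⟪(T ^ (2 * n)) x, x⟫ = ⟪(T ^ n) x, (T ^ n) x⟫ := by
      rw [two_mul, pow_add, ContinuousLinearMap.mul_apply]
      exact hsymm ((T ^ n) x) x
    have h2 : a (2 * n) = ‖(T ^ n) x‖ ^ 2 := by
      rw [ha]; simp only [h1]
      exact_mod_cast @inner_self_eq_norm_sq ℂ _ _ _ _ ((T ^ n) x)
    calc (a n) ^ 2 ≤ ‖⟪(T ^ n) x, x⟫‖ ^ 2 := by
          apply pow_le_pow_left₀ (ha_nonneg n)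
          exact Complex.re_le_norm _
      _ ≤ (‖(T ^ n) x‖ * ‖x‖) ^ 2 := by
          apply pow_le_pow_left₀ (norm_nonneg _)
          exact norm_inner_le_norm _ _
      _ = a (2 * n) * ‖x‖ ^ 2 := by rw [h2]; ring
  -- iterate
  have hiter : ∀ k : ℕ, (a 1) ^ (2 ^ k) * ‖x‖ ^ 2 ≤ a (2 ^ k) * (‖x‖ ^ 2) ^ (2 ^ k) := by
    intro k
    induction k with
    | zero => simp
    | succ k ih =>
      have hsq := mul_self_le_mul_self (mul_nonneg (pow_nonneg (ha_nonneg 1) _) hx2.le) ih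
      have hs2 := hstep (2 ^ k)
      have key : (a 1) ^ (2 ^ (k+1)) * ‖x‖ ^ 2 * ‖x‖ ^ 2 ≤
          a (2 ^ (k+1)) * (‖x‖ ^ 2) ^ (2 ^ (k+1)) * ‖x‖ ^ 2 := by
        have e1 : (a 1) ^ (2 ^ (k+1)) * ‖x‖ ^ 2 * ‖x‖ ^ 2
            = ((a 1) ^ (2 ^ k) * ‖x‖ ^ 2) * ((a 1) ^ (2 ^ k) * ‖x‖ ^ 2) := by
          rw [pow_succ, pow_mul]; ring
        have e2 : (a (2 ^ k) * (‖x‖ ^ 2) ^ (2 ^ k)) * (a (2 ^ k) * (‖x‖ ^ 2) ^ (2 ^ k))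
            = (a (2 ^ k)) ^ 2 * ((‖x‖ ^ 2) ^ (2 ^ k)) ^ 2 := by ring
        have e3 : (2 : ℕ) * 2 ^ k = 2 ^ (k + 1) := by rw [pow_succ]; ring
        calc (a 1) ^ (2 ^ (k+1)) * ‖x‖ ^ 2 * ‖x‖ ^ 2
            = ((a 1) ^ (2 ^ k) * ‖x‖ ^ 2) * ((a 1) ^ (2 ^ k) * ‖x‖ ^ 2) := e1
          _ ≤ (a (2 ^ k) * (‖x‖ ^ 2) ^ (2 ^ k)) * (a (2 ^ k) * (‖x‖ ^ 2) ^ (2 ^ k)) := hsq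
          _ = (a (2 ^ k)) ^ 2 * ((‖x‖ ^ 2) ^ (2 ^ k)) ^ 2 := e2
          _ ≤ (a (2 * 2 ^ k) * ‖x‖ ^ 2) * ((‖x‖ ^ 2) ^ (2 ^ k)) ^ 2 := by
              apply mul_le_mul_of_nonneg_right hs2 (by positivity)
          _ = a (2 ^ (k+1)) * (‖x‖ ^ 2) ^ (2 ^ (k+1)) * ‖x‖ ^ 2 := by
              rw [e3, ← pow_mul, show 2 ^ k * 2 = 2 ^ (k+1) from by rw [pow_succ]]
              ring
      exact le_of_mul_le_mul_right key hx2
  -- combine with growth bound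
  have hfin : ∀ k : ℕ, (a 1) ^ (2 ^ k) * ‖x‖ ^ 2 ≤ D * (r * ‖x‖ ^ 2) ^ (2 ^ k) := by
    intro k
    refine (hiter k).trans ?_
    have := h (2 ^ k) (Nat.one_le_two_pow)
    calc a (2 ^ k) * (‖x‖ ^ 2) ^ (2 ^ k) ≤ (D * r ^ (2 ^ k)) * (‖x‖ ^ 2) ^ (2 ^ k) := by
          apply mul_le_mul_of_nonneg_right this (by positivity)
      _ = D * (r * ‖x‖ ^ 2) ^ (2 ^ k) := by rw [mul_pow]; ring
  -- conclude
  by_contra hcon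
  push_neg at hcon
  set b := r * ‖x‖ ^ 2 with hb
  have hbnn : 0 ≤ b := by positivity
  rcases hbnn.eq_or_lt with hb0 | hbpos
  · have := hfin 0
    simp only [pow_zero, pow_one, ← hb0] at this
    have ha1 : a 1 ≤ 0 := by nlinarith [ha_nonneg 1]
    have : a 1 ≤ b := by rw [← hb0]; exact ha1
    have : (⟪T x, x⟫).re ≤ b := by simpa [ha, pow_one] using this
    linarith
  · have hq : ∀ k : ℕ, ((a 1) / b) ^ (2 ^ k) ≤ D / ‖x‖ ^ 2 := by
      intro k
      rw [div_pow, div_le_div_iff₀ (by positivity) hx2]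
      calc (a 1) ^ 2 ^ k * ‖x‖ ^ 2 ≤ D * b ^ 2 ^ k := hfin k
        _ = D * b ^ 2 ^ k := rfl
    have hgt1 : 1 < (a 1) / b := by
      rw [lt_div_iff₀ hbpos, one_mul]
      simpa [ha, pow_one] using hcon
    have htend : Tendsto (fun k : ℕ => ((a 1) / b) ^ (2 ^ k)) atTop atTop :=
      (tendsto_pow_atTop_atTop_of_one_lt hgt1).comp
        (tendsto_pow_atTop_atTop_of_one_lt (one_lt_two : (1:ℕ) < 2))
    obtain ⟨k, hk⟩ := (htend.eventually_gt_atTop (D / ‖x‖ ^ 2)).exists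
    exact absurd (hq k) (not_le.mpr hk)

private lemma span_growth (T : H →L[ℂ] H) (hT : T.IsPositive) (ξ : H) (C r : ℝ)
    (hC : 0 ≤ C) (hr : 0 ≤ r)
    (hbound : ∀ n : ℕ, 1 ≤ n → (⟪(T ^ n) ξ, ξ⟫).re ≤ C * r ^ n)
    (x : H) (hx : x ∈ Submodule.span ℂ (Set.range fun n : ℕ => (T ^ n) ξ)) :
    ∃ D : ℝ, 0 ≤ D ∧ ∀ n : ℕ, 1 ≤ n → (⟪(T ^ n) x, x⟫).re ≤ D * r ^ n := by
  rw [Finsupp.mem_span_range_iff_exists_finsupp] at hx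
  obtain ⟨c, rfl⟩ := hx
  rw [Finsupp.sum] at *
  set s := c.support with hs
  set K : ℝ := ∑ i ∈ s, ‖c i‖ * r ^ i with hK
  have hKnn : 0 ≤ K := Finset.sum_nonneg fun i _ => by positivity
  refine ⟨C * K ^ 2, by positivity, fun n hn => ?_⟩
  -- real nonneg values of moments
  have hreal : ∀ m : ℕ, ⟪(T ^ m) ξ, ξ⟫ = (((⟪(T ^ m) ξ, ξ⟫).re : ℝ) : ℂ) :=
    fun m => ((ContinuousLinearMap.isPositive_iff_complex _).mp (pow_isPositive T hT m) ξ).1.symm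
  have hmom_nn : ∀ m : ℕ, 0 ≤ (⟪(T ^ m) ξ, ξ⟫).re :=
    fun m => (pow_isPositive T hT m).re_inner_nonneg_left ξ
  -- expand the inner product
  have hTx : (T ^ n) (∑ i ∈ s, c i • (T ^ i) ξ) = ∑ i ∈ s, c i • (T ^ (n + i)) ξ := by
    rw [map_sum]
    refine Finset.sum_congr rfl fun i _ => ?_
    rw [map_smul, ← ContinuousLinearMap.mul_apply, ← pow_add]
  have hexp : ⟪(T ^ n) (∑ i ∈ s, c i • (T ^ i) ξ), ∑ j ∈ s, c j • (T ^ j) ξ⟫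
      = ∑ i ∈ s, ∑ j ∈ s, (starRingEnd ℂ) (c i) * c j * ⟪(T ^ (n + i + j)) ξ, ξ⟫ := by
    rw [hTx, sum_inner]
    refine Finset.sum_congr rfl fun i _ => ?_
    rw [inner_sum]
    refine Finset.sum_congr rfl fun j _ => ?_
    rw [inner_smul_left, inner_smul_right]
    have hsym := (hT.isSelfAdjoint.pow j).isSymmetric
    have : ⟪(T ^ (n + i)) ξ, (T ^ j) ξ⟫ = ⟪(T ^ (n + i + j)) ξ, ξ⟫ := by
      have h0 : ⟪(T ^ (n + i)) ξ, (T ^ j) ξ⟫ = ⟪(T ^ j) ((T ^ (n + i)) ξ), ξ⟫ :=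
        (hsym ((T ^ (n + i)) ξ) ξ).symm
      rw [h0, ← ContinuousLinearMap.mul_apply, ← pow_add,
        show j + (n + i) = n + i + j from by ring]
    rw [this]; ring
  rw [hexp]
  -- bound the real part of the double sum
  have hre : (∑ i ∈ s, ∑ j ∈ s, (starRingEnd ℂ) (c i) * c j * ⟪(T ^ (n + i + j)) ξ, ξ⟫).re
      = ∑ i ∈ s, ∑ j ∈ s, ((starRingEnd ℂ) (c i) * c j).re * (⟪(T ^ (n + i + j)) ξ, ξ⟫).re := by
    rw [Complex.re_sum]
    refine Finset.sum_congr rfl fun i _ => ?_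
    rw [Complex.re_sum]
    refine Finset.sum_congr rfl fun j _ => ?_
    rw [hreal (n + i + j)]
    simp [Complex.mul_re]
  rw [hre]
  have hterm : ∀ i ∈ s, ∀ j ∈ s,
      ((starRingEnd ℂ) (c i) * c j).re * (⟪(T ^ (n + i + j)) ξ, ξ⟫).re
        ≤ (‖c i‖ * r ^ i) * (‖c j‖ * r ^ j) * (C * r ^ n) := by
    intro i _ j _
    have h1 : ((starRingEnd ℂ) (c i) * c j).re ≤ ‖c i‖ * ‖c j‖ := by
      calc ((starRingEnd ℂ) (c i) * c j).re ≤ ‖(starRingEnd ℂ) (c i) * c j‖ := Complex.re_le_norm _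
        _ = ‖c i‖ * ‖c j‖ := by rw [norm_mul, RCLike.norm_conj]
    have h2 : (⟪(T ^ (n + i + j)) ξ, ξ⟫).re ≤ C * r ^ (n + i + j) :=
      hbound _ (le_trans hn (by omega))
    calc ((starRingEnd ℂ) (c i) * c j).re * (⟪(T ^ (n + i + j)) ξ, ξ⟫).re
        ≤ (‖c i‖ * ‖c j‖) * (⟪(T ^ (n + i + j)) ξ, ξ⟫).re :=
          mul_le_mul_of_nonneg_right h1 (hmom_nn _)
      _ ≤ (‖c i‖ * ‖c j‖) * (C * r ^ (n + i + j)) :=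
          mul_le_mul_of_nonneg_left h2 (by positivity)
      _ = (‖c i‖ * r ^ i) * (‖c j‖ * r ^ j) * (C * r ^ n) := by
          rw [pow_add, pow_add]; ring
  calc (∑ i ∈ s, ∑ j ∈ s, ((starRingEnd ℂ) (c i) * c j).re * (⟪(T ^ (n + i + j)) ξ, ξ⟫).re)
      ≤ ∑ i ∈ s, ∑ j ∈ s, (‖c i‖ * r ^ i) * (‖c j‖ * r ^ j) * (C * r ^ n) :=
        Finset.sum_le_sum fun i hi => Finset.sum_le_sum fun j hj => hterm i hi j hj
    _ = C * K ^ 2 * r ^ n := by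
        rw [hK, sq, Finset.sum_mul_sum]
        simp only [Finset.mul_sum, Finset.sum_mul]
        exact Finset.sum_congr rfl fun i _ => Finset.sum_congr rfl fun j _ => by ring

/-- If `T ≥ 0` is a bounded self-adjoint operator, `ξ` is a cyclic vector for
`T`, and `⟨Tⁿ ξ, ξ⟩ ≤ C rⁿ` for all `n ≥ 1`, then `‖T‖ ≤ r`. -/
theorem norm_le_of_cyclic_growth (T : H →L[ℂ] H) (hT : T.IsPositive)
    (ξ : H) (C r : ℝ) (hC : 0 ≤ C) (hr : 0 ≤ r)
    (hbound : ∀ n : ℕ, 1 ≤ n → (⟪(T ^ n) ξ, ξ⟫).re ≤ C * r ^ n)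
    (hcyclic : Dense ((Submodule.span ℂ (Set.range fun n : ℕ => (T ^ n) ξ) : Submodule ℂ H) :
      Set H)) :
    ‖T‖ ≤ r := by
  have hq : ∀ x : H, (⟪T x, x⟫).re ≤ r * ‖x‖ ^ 2 := by
    have hsub : ((Submodule.span ℂ (Set.range fun n : ℕ => (T ^ n) ξ) : Submodule ℂ H) : Set H) ⊆
        {x : H | (⟪T x, x⟫).re ≤ r * ‖x‖ ^ 2} := by
      intro x hx
      obtain ⟨D, hD, hDb⟩ := span_growth T hT ξ C r hC hr hbound x hx
      exact inner_le_of_growth T hT x D r hD hr hDb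
    have hcont1 : Continuous fun x : H => (⟪T x, x⟫).re :=
      Complex.continuous_re.comp (continuous_inner.comp (T.continuous.prodMk continuous_id))
    have hclosed : IsClosed {x : H | (⟪T x, x⟫).re ≤ r * ‖x‖ ^ 2} :=
      isClosed_le hcont1 (by fun_prop)
    intro x
    exact closure_minimal hsub hclosed (hcyclic x)
  have hle : T ≤ (r : ℂ) • (1 : H →L[ℂ] H) := by
    rw [ContinuousLinearMap.le_def]
    constructor
    · have h1 : IsSelfAdjoint ((r : ℂ) • (1 : H →L[ℂ] H)) := by
        refine IsSelfAdjoint.smul ?_ (IsSelfAdjoint.one _)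
        simp [isSelfAdjoint_iff, RCLike.star_def, Complex.conj_ofReal]
      exact (h1.sub hT.isSelfAdjoint).isSymmetric
    · intro x
      rw [ContinuousLinearMap.reApplyInnerSelf_apply]
      simp only [ContinuousLinearMap.sub_apply, ContinuousLinearMap.smul_apply,
        ContinuousLinearMap.one_apply, inner_sub_left, inner_smul_left,
        Complex.conj_ofReal, map_sub]
      have h2 : (((r : ℂ) * ⟪x, x⟫).re : ℝ) = r * ‖x‖ ^ 2 := by
        rw [Complex.re_ofReal_mul]
        congr 1
        exact_mod_cast @inner_self_eq_norm_sq ℂ _ _ _ _ x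
      have := hq x
      simp only [RCLike.re_to_complex] at *
      rw [h2]
      linarith
  have hpos : (0 : H →L[ℂ] H) ≤ T := (ContinuousLinearMap.nonneg_iff_isPositive T).mpr hT
  calc ‖T‖ ≤ ‖(r : ℂ) • (1 : H →L[ℂ] H)‖ := CStarAlgebra.norm_le_norm_of_nonneg_of_le hpos hle
    _ ≤ ‖(r : ℂ)‖ * ‖(1 : H →L[ℂ] H)‖ := norm_smul_le _ _
    _ ≤ r * 1 := by
        apply mul_le_mul
        · simp [abs_of_nonneg hr]
        · rw [ContinuousLinearMap.one_def]; exact ContinuousLinearMap.norm_id_le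
        · exact norm_nonneg _
        · exact hr
    _ = r := mul_one r

end
end

section
/- Let V be a finite-dimensional subspace of C(K), for K a compact group with normalized Haar measure, such that V is invariant under all left translations. Then every v ∈ V satisfies ‖v‖_∞ ≤ (dim V)^{1/2} ‖v‖_{L²(K)}. -/
open MeasureTheory

noncomputable section

set_option linter.unusedSectionVars false
set_option maxHeartbeats 1000000

section Aux
variable {K : Type*} [Group K] [TopologicalSpace K]
    [IsTopologicalGroup K] [CompactSpace K] [MeasurableSpace K] [BorelSpace K]
    (ν : Measure K) [ν.IsHaarMeasure] [IsProbabilityMeasure ν]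

def TT : C(K, ℂ) →L[ℂ] Lp ℂ 2 ν := ContinuousMap.toLp 2 ν ℂ

lemma inner_TT (u w : C(K, ℂ)) :
    inner ℂ (TT ν u) (TT ν w) = ∫ k, (starRingEnd ℂ) (u k) * w k ∂ν := by
  rw [show TT ν u = ContinuousMap.toLp 2 ν ℂ u from rfl,
    show TT ν w = ContinuousMap.toLp 2 ν ℂ w from rfl, L2.inner_def]
  refine integral_congr_ae ?_
  filter_upwards [ContinuousMap.coeFn_toLp (p := 2) (μ := ν) (𝕜 := ℂ) u,
    ContinuousMap.coeFn_toLp (p := 2) (μ := ν) (𝕜 := ℂ) w] with k h1 h2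
  rw [h1, h2, RCLike.inner_apply']

lemma inner_TT_real (u : C(K, ℂ)) :
    (inner ℂ (TT ν u) (TT ν u) : ℂ) = ((∫ k, ‖u k‖ ^ 2 ∂ν : ℝ) : ℂ) := by
  rw [inner_TT]
  have h : ∀ k, (starRingEnd ℂ) (u k) * u k = ((‖u k‖ ^ 2 : ℝ) : ℂ) := fun k => by
    rw [Complex.conj_mul']; norm_cast
  simp_rw [h]
  exact integral_ofReal (𝕜 := ℂ)

lemma norm_TT_sq (u : C(K, ℂ)) : ‖TT ν u‖ ^ 2 = ∫ k, ‖u k‖ ^ 2 ∂ν := by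
  have h := InnerProductSpace.norm_sq_eq_re_inner (𝕜 := ℂ) (TT ν u)
  rw [h, inner_TT_real]; simp

lemma cm_integrable (f : C(K, ℝ)) : Integrable f ν := by
  exact (BoundedContinuousFunction.mkOfCompact f).integrable ν

end Aux

lemma parseval_sum {E : Type*} [NormedAddCommGroup E] [InnerProductSpace ℂ E]
    {n : ℕ} (b : OrthonormalBasis (Fin n) ℂ E) (x : E) :
    ‖x‖ ^ 2 = ∑ i, ‖(inner ℂ (b i) x : ℂ)‖ ^ 2 := by
  have h1 : ‖b.repr x‖ = ‖x‖ := b.repr.norm_map x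
  rw [← h1, EuclideanSpace.norm_eq, Real.sq_sqrt (by positivity)]
  refine Finset.sum_congr rfl fun i _ => ?_
  rw [b.repr_apply_apply]


/-- If `V` is a finite-dimensional left-translation-invariant subspace of
`C(K)` for a compact group `K` with normalized Haar measure, then every `v ∈ V` satisfies
`‖v‖_∞ ≤ (dim V)^{1/2} ‖v‖_{L²(K)}`. -/
theorem sup_le_sqrt_dim_mul_L2 {K : Type*} [Group K] [TopologicalSpace K]
    [IsTopologicalGroup K] [CompactSpace K] [MeasurableSpace K] [BorelSpace K]
    (ν : Measure K) [ν.IsHaarMeasure] [IsProbabilityMeasure ν]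
    (V : Submodule ℂ C(K, ℂ)) [FiniteDimensional ℂ V]
    (hinv : ∀ g : K, ∀ v ∈ V,
      ContinuousMap.comp v ((Homeomorph.mulLeft g⁻¹ : K ≃ₜ K) : C(K, K)) ∈ V)
    (v : C(K, ℂ)) (hv : v ∈ V) :
    ‖v‖ ≤ Real.sqrt (Module.finrank ℂ V) * Real.sqrt (∫ k, ‖v k‖ ^ 2 ∂ν) := by
  classical
  set S : V →ₗ[ℂ] Lp ℂ 2 ν := (TT ν).toLinearMap.comp V.subtype with hSdef
  have hS : Function.Injective S := by
    intro x y h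
    exact Subtype.ext (ContinuousMap.toLp_injective ν h)
  set W : Submodule ℂ (Lp ℂ 2 ν) := LinearMap.range S with hWdef
  haveI : FiniteDimensional ℂ W := inferInstance
  set e : V ≃ₗ[ℂ] W := LinearEquiv.ofInjective S hS with hedef
  have hecoe : ∀ u : V, ((e u : W) : Lp ℂ 2 ν) = TT ν (u : C(K, ℂ)) := fun u => rfl
  set n := Module.finrank ℂ W with hndef
  have hnV : Module.finrank ℂ V = n := e.finrank_eq
  set b : OrthonormalBasis (Fin n) ℂ W := stdOrthonormalBasis ℂ W with hbdef
  -- evaluation functionals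
  set ℓ : K → (W →ₗ[ℂ] ℂ) := fun k =>
    { toFun := fun x => ((e.symm x : V) : C(K, ℂ)) k
      map_add' := by intro x y; simp
      map_smul' := by intro c x; simp } with hldef
  set φ : K → (W →L[ℂ] ℂ) := fun k => LinearMap.toContinuousLinearMap (ℓ k) with hpdef
  set w : K → W := fun k => (InnerProductSpace.toDual ℂ W).symm (φ k) with hwdef
  have hφw : ∀ (k : K) (x : W), (inner ℂ (w k) x : ℂ) = ((e.symm x : V) : C(K, ℂ)) k := by
    intro k x
    rw [hwdef, InnerProductSpace.toDual_symm_apply]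
    rfl
  set Φ : K → ℝ := fun k => ‖w k‖ ^ 2 with hPdef
  -- inner products in W as integrals
  have hinnW : ∀ u u' : V, (inner ℂ (e u) (e u') : ℂ) =
      ∫ k, (starRingEnd ℂ) ((u : C(K, ℂ)) k) * (u' : C(K, ℂ)) k ∂ν := by
    intro u u'
    rw [← inner_TT ν, ← hecoe, ← hecoe]
    rfl
  -- Φ as sum over the basis
  have hΦ_eq : ∀ k, Φ k = ∑ i, ‖((e.symm (b i) : V) : C(K, ℂ)) k‖ ^ 2 := by
    intro k
    rw [hPdef]
    simp only
    rw [parseval_sum b (w k)]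
    refine Finset.sum_congr rfl fun i _ => ?_
    rw [show ‖(inner ℂ (b i) (w k) : ℂ)‖ = ‖(inner ℂ (w k) (b i) : ℂ)‖ from by exact norm_inner_symm (𝕜 := ℂ) (b i) (w k), hφw]
  -- translation inequality
  have key : ∀ g k : K, Φ (g⁻¹ * k) ≤ Φ k := by
    intro g k
    set t : Fin n → V := fun i =>
      ⟨ContinuousMap.comp ((e.symm (b i) : V) : C(K, ℂ))
          ((Homeomorph.mulLeft g⁻¹ : K ≃ₜ K) : C(K, K)),
        hinv g _ (e.symm (b i)).2⟩ with htdef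
    have ht_apply : ∀ i k', ((t i : V) : C(K, ℂ)) k' =
        ((e.symm (b i) : V) : C(K, ℂ)) (g⁻¹ * k') := fun i k' => rfl
    have horth : Orthonormal ℂ (fun i => e (t i)) := by
      rw [orthonormal_iff_ite]
      intro i j
      rw [hinnW]
      have := b.orthonormal
      rw [orthonormal_iff_ite] at this
      rw [← this i j]
      calc ∫ k', (starRingEnd ℂ) (((t i : V) : C(K, ℂ)) k') * ((t j : V) : C(K, ℂ)) k' ∂ν
          = ∫ k', (starRingEnd ℂ) (((e.symm (b i) : V) : C(K, ℂ)) (g⁻¹ * k')) *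
              ((e.symm (b j) : V) : C(K, ℂ)) (g⁻¹ * k') ∂ν := by
            refine integral_congr_ae (Filter.Eventually.of_forall fun k' => ?_)
            rfl
        _ = ∫ k', (starRingEnd ℂ) (((e.symm (b i) : V) : C(K, ℂ)) k') *
              ((e.symm (b j) : V) : C(K, ℂ)) k' ∂ν :=
            integral_mul_left_eq_self
              (fun k' => (starRingEnd ℂ) (((e.symm (b i) : V) : C(K, ℂ)) k') *
                ((e.symm (b j) : V) : C(K, ℂ)) k') g⁻¹
        _ = inner ℂ (e (e.symm (b i))) (e (e.symm (b j))) := (hinnW _ _).symm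
        _ = inner ℂ (b i) (b j) := by rw [e.apply_symm_apply, e.apply_symm_apply]
    have hb : ∑ i, ‖(inner ℂ (e (t i)) (w k) : ℂ)‖ ^ 2 ≤ ‖w k‖ ^ 2 :=
      horth.sum_inner_products_le (w k)
    calc Φ (g⁻¹ * k) = ∑ i, ‖((e.symm (b i) : V) : C(K, ℂ)) (g⁻¹ * k)‖ ^ 2 := hΦ_eq _
      _ = ∑ i, ‖(inner ℂ (e (t i)) (w k) : ℂ)‖ ^ 2 := by
          refine Finset.sum_congr rfl fun i _ => ?_
          have h5 : ‖(inner ℂ (e (t i)) (w k) : ℂ)‖ =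
              ‖((e.symm (b i) : V) : C(K, ℂ)) (g⁻¹ * k)‖ := by
            rw [show ‖(inner ℂ (e (t i)) (w k) : ℂ)‖ = ‖(inner ℂ (w k) (e (t i)) : ℂ)‖ from by exact norm_inner_symm (𝕜 := ℂ) (e (t i)) (w k), hφw, e.symm_apply_apply, ht_apply]
          rw [h5]
      _ ≤ ‖w k‖ ^ 2 := hb
      _ = Φ k := rfl
  have hconst : ∀ x : K, Φ x = Φ 1 := by
    intro x
    have h1 : Φ x ≤ Φ 1 := by simpa using key x⁻¹ 1
    have h2 : Φ 1 ≤ Φ x := by simpa using key x x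
    linarith
  -- integral of Φ is n
  have hint : ∫ k, Φ k ∂ν = (n : ℝ) := by
    have hcont : ∀ i : Fin n, Continuous fun k => ‖((e.symm (b i) : V) : C(K, ℂ)) k‖ ^ 2 := by
      intro i; fun_prop
    calc ∫ k, Φ k ∂ν = ∫ k, ∑ i, ‖((e.symm (b i) : V) : C(K, ℂ)) k‖ ^ 2 ∂ν :=
          integral_congr_ae (Filter.Eventually.of_forall fun k => hΦ_eq k)
      _ = ∑ i, ∫ k, ‖((e.symm (b i) : V) : C(K, ℂ)) k‖ ^ 2 ∂ν := by
          refine integral_finset_sum _ fun i _ => ?_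
          exact cm_integrable ν ⟨_, hcont i⟩
      _ = ∑ i, ‖TT ν ((e.symm (b i) : V) : C(K, ℂ))‖ ^ 2 := by
          refine Finset.sum_congr rfl fun i _ => (norm_TT_sq ν _).symm
      _ = ∑ i, ‖b i‖ ^ 2 := by
          refine Finset.sum_congr rfl fun i _ => ?_
          rw [← hecoe, e.apply_symm_apply]
          rfl
      _ = (n : ℝ) := by
          have := b.orthonormal.1
          simp [this]
  have hΦn : ∀ k, Φ k = (n : ℝ) := by
    intro k
    have : ∫ k, Φ k ∂ν = Φ 1 := by
      rw [integral_congr_ae (Filter.Eventually.of_forall hconst)]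
      simp
    rw [hconst k, ← this, hint]
  -- pointwise bound
  have hTv : ‖TT ν v‖ = Real.sqrt (∫ k, ‖v k‖ ^ 2 ∂ν) := by
    rw [← norm_TT_sq ν v, Real.sqrt_sq (norm_nonneg _)]
  have hpt : ∀ k, ‖v k‖ ≤ Real.sqrt n * Real.sqrt (∫ k, ‖v k‖ ^ 2 ∂ν) := by
    intro k
    have h1 : v k = (inner ℂ (w k) (e ⟨v, hv⟩) : ℂ) := by
      rw [hφw, e.symm_apply_apply]
    have h2 : ‖(inner ℂ (w k) (e ⟨v, hv⟩) : ℂ)‖ ≤ ‖w k‖ * ‖e ⟨v, hv⟩‖ :=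
      by exact norm_inner_le_norm (𝕜 := ℂ) (w k) (e ⟨v, hv⟩)
    have h3 : ‖w k‖ = Real.sqrt n := by
      have := hΦn k
      rw [hPdef] at this
      simp only at this
      rw [← Real.sqrt_sq (norm_nonneg (w k)), this]
    have h4 : ‖(e ⟨v, hv⟩ : W)‖ = ‖TT ν v‖ := by
      rw [← Submodule.norm_coe, hecoe ⟨v, hv⟩]
    rw [h1]
    calc ‖(inner ℂ (w k) (e ⟨v, hv⟩) : ℂ)‖ ≤ ‖w k‖ * ‖e ⟨v, hv⟩‖ := h2
      _ = Real.sqrt n * Real.sqrt (∫ k, ‖v k‖ ^ 2 ∂ν) := by rw [h3, h4, hTv]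
  rw [hnV]
  exact (ContinuousMap.norm_le _ (by positivity)).2 hpt


end
end

section
/- Let G be a semisimple Lie group with Weyl group W acting on a*, and suppose μ ∈ a* and λ ∈ conv(Wμ), the convex hull of the Weyl orbit of μ. Then φ_λ(g) ≤ φ_μ(g) for all g ∈ G, where φ_ν denotes the Harish-Chandra spherical function with parameter ν. -/
open MeasureTheory

noncomputable section

variable {G : Type*} [Group G] [TopologicalSpace G] [IsTopologicalGroup G]
  [MeasurableSpace G] [BorelSpace G]
  {𝔞 : Type*} [AddCommGroup 𝔞] [Module ℝ 𝔞] [TopologicalSpace 𝔞]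

/-- The Harish-Chandra spherical function with real parameter `ξ`:
`φ_ξ(g) = ∫_K e^{-(ξ-ρ)(H(g⁻¹k))} dk`, where `Hmap` is the Iwasawa projection. -/
def sph (K : Subgroup G) (ν : Measure K) (Hmap : G → 𝔞) (ρ : 𝔞 →L[ℝ] ℝ)
    (ξ : 𝔞 →L[ℝ] ℝ) (g : G) : ℝ :=
  ∫ k : K, Real.exp (-(ξ (Hmap (g⁻¹ * ↑k)) - ρ (Hmap (g⁻¹ * ↑k)))) ∂ν

lemma sph_integrable (K : Subgroup G) [CompactSpace K] (ν : Measure K)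
    [IsProbabilityMeasure ν]
    (Hmap : G → 𝔞) (ρ : 𝔞 →L[ℝ] ℝ)
    (hH : ∀ g : G, Continuous fun k : K => Hmap (g⁻¹ * ↑k)) (ξ : 𝔞 →L[ℝ] ℝ) (g : G) :
    Integrable (fun k : K =>
      Real.exp (-(ξ (Hmap (g⁻¹ * ↑k)) - ρ (Hmap (g⁻¹ * ↑k))))) ν := by
  haveI : OpensMeasurableSpace K := Subtype.opensMeasurableSpace _
  apply Continuous.integrable_of_hasCompactSupport
  · exact (Real.continuous_exp.comp
      (((ξ.continuous.comp (hH g)).sub (ρ.continuous.comp (hH g))).neg))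
  · exact HasCompactSupport.of_compactSpace _

/-- Convexity of `sph` in the parameter. -/
lemma sph_convex (K : Subgroup G) [CompactSpace K] (ν : Measure K)
    [IsProbabilityMeasure ν]
    (Hmap : G → 𝔞) (ρ : 𝔞 →L[ℝ] ℝ)
    (hH : ∀ g : G, Continuous fun k : K => Hmap (g⁻¹ * ↑k))
    (ξ₁ ξ₂ : 𝔞 →L[ℝ] ℝ) (a b : ℝ) (ha : 0 ≤ a) (hb : 0 ≤ b) (hab : a + b = 1) (g : G) :
    sph K ν Hmap ρ (a • ξ₁ + b • ξ₂) g ≤ a * sph K ν Hmap ρ ξ₁ g + b * sph K ν Hmap ρ ξ₂ g := by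
  have h1 := sph_integrable K ν Hmap ρ hH ξ₁ g
  have h2 := sph_integrable K ν Hmap ρ hH ξ₂ g
  have hle : ∀ k : K,
      Real.exp (-((a • ξ₁ + b • ξ₂) (Hmap (g⁻¹ * ↑k)) - ρ (Hmap (g⁻¹ * ↑k)))) ≤
      a * Real.exp (-(ξ₁ (Hmap (g⁻¹ * ↑k)) - ρ (Hmap (g⁻¹ * ↑k)))) +
      b * Real.exp (-(ξ₂ (Hmap (g⁻¹ * ↑k)) - ρ (Hmap (g⁻¹ * ↑k)))) := by
    intro k
    have := convexOn_exp.2 (Set.mem_univ (-(ξ₁ (Hmap (g⁻¹ * ↑k)) - ρ (Hmap (g⁻¹ * ↑k)))))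
      (Set.mem_univ (-(ξ₂ (Hmap (g⁻¹ * ↑k)) - ρ (Hmap (g⁻¹ * ↑k))))) ha hb hab
    simp only [smul_eq_mul] at this
    calc Real.exp (-((a • ξ₁ + b • ξ₂) (Hmap (g⁻¹ * ↑k)) - ρ (Hmap (g⁻¹ * ↑k))))
        = Real.exp (a * (-(ξ₁ (Hmap (g⁻¹ * ↑k)) - ρ (Hmap (g⁻¹ * ↑k)))) +
            b * (-(ξ₂ (Hmap (g⁻¹ * ↑k)) - ρ (Hmap (g⁻¹ * ↑k))))) := by
          congr 1
          simp only [ContinuousLinearMap.add_apply, ContinuousLinearMap.coe_smul',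
            Pi.smul_apply, smul_eq_mul]
          linear_combination (-(ρ (Hmap (g⁻¹ * ↑k)))) * hab
      _ ≤ _ := this
  calc sph K ν Hmap ρ (a • ξ₁ + b • ξ₂) g
      ≤ ∫ k : K, (a * Real.exp (-(ξ₁ (Hmap (g⁻¹ * ↑k)) - ρ (Hmap (g⁻¹ * ↑k)))) +
          b * Real.exp (-(ξ₂ (Hmap (g⁻¹ * ↑k)) - ρ (Hmap (g⁻¹ * ↑k))))) ∂ν := by
        exact integral_mono (sph_integrable K ν Hmap ρ hH _ g)
          ((h1.const_mul a).add (h2.const_mul b)) hle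
    _ = a * sph K ν Hmap ρ ξ₁ g + b * sph K ν Hmap ρ ξ₂ g := by
        rw [integral_add (h1.const_mul a) (h2.const_mul b),
          integral_const_mul, integral_const_mul]
        rfl

/-- If `W` is the (finite) Weyl group acting on `𝔞*` (spherical functions
being `W`-invariant in their parameter), `μ₀ ∈ 𝔞*` and `λ ∈ conv(W μ₀)`, then
`φ_λ(g) ≤ φ_{μ₀}(g)` for all `g ∈ G`. -/
theorem spherical_mono_convexHull
    (K : Subgroup G) [CompactSpace K] (ν : Measure K) [ν.IsHaarMeasure]
    [IsProbabilityMeasure ν]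
    (Hmap : G → 𝔞) (ρ : 𝔞 →L[ℝ] ℝ)
    (hH : ∀ g : G, Continuous fun k : K => Hmap (g⁻¹ * ↑k))
    (W : Finset ((𝔞 →L[ℝ] ℝ) →ₗ[ℝ] (𝔞 →L[ℝ] ℝ)))
    (mu0 lam : 𝔞 →L[ℝ] ℝ)
    (hWinv : ∀ w ∈ W, ∀ g : G, sph K ν Hmap ρ (w mu0) g = sph K ν Hmap ρ mu0 g)
    (hconv : lam ∈ convexHull ℝ ((fun w : (𝔞 →L[ℝ] ℝ) →ₗ[ℝ] (𝔞 →L[ℝ] ℝ) => w mu0) '' (W : Set ((𝔞 →L[ℝ] ℝ) →ₗ[ℝ] (𝔞 →L[ℝ] ℝ))))) :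
    ∀ g : G, sph K ν Hmap ρ lam g ≤ sph K ν Hmap ρ mu0 g := by
  set S : Set (𝔞 →L[ℝ] ℝ) :=
    {ξ | ∀ g : G, sph K ν Hmap ρ ξ g ≤ sph K ν Hmap ρ mu0 g} with hS
  have hconvS : Convex ℝ S := by
    intro ξ₁ h₁ ξ₂ h₂ a b ha hb hab g
    calc sph K ν Hmap ρ (a • ξ₁ + b • ξ₂) g
        ≤ a * sph K ν Hmap ρ ξ₁ g + b * sph K ν Hmap ρ ξ₂ g :=
          sph_convex K ν Hmap ρ hH ξ₁ ξ₂ a b ha hb hab g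
      _ ≤ a * sph K ν Hmap ρ mu0 g + b * sph K ν Hmap ρ mu0 g := by
          gcongr <;> [exact h₁ g; exact h₂ g]
      _ = sph K ν Hmap ρ mu0 g := by linear_combination (sph K ν Hmap ρ mu0 g) * hab
  have hsub : ((fun w : (𝔞 →L[ℝ] ℝ) →ₗ[ℝ] (𝔞 →L[ℝ] ℝ) => w mu0) ''
      (W : Set ((𝔞 →L[ℝ] ℝ) →ₗ[ℝ] (𝔞 →L[ℝ] ℝ)))) ⊆ S := by
    rintro _ ⟨w, hw, rfl⟩ g
    exact (hWinv w hw g).le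
  exact convexHull_min hsub hconvS hconv
end
end
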